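/- Let S be a nontrivial ring and let n ≥ 2 be an integer. Then the ring M_n(S) of n × n matrices over S is not a UJ# ring. -/

import Mathlib

/-- `J#(R)`: the set of elements `z` such that `z ^ n` lies in the Jacobson radical
(the intersection of the maximal left ideals) for some `n ≥ 1`. -/
def Jsharp (R : Type*) [Ring R] : Set R :=
  {z : R | ∃ n : ℕ, 1 ≤ n ∧ z ^ n ∈ Ideal.jacobson (⊥ : Ideal R)}

/-- A ring is a `UJ#` ring if `u - 1 ∈ J#(R)` for every unit `u`. -/
def IsUJsharp (R : Type*) [Ring R] : Prop :=
  ∀ u : Rˣ, ((u : R) - 1) ∈ Jsharp R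

/-- Auxiliary: the matrix unit `E_{ij}` over `S`. -/
def MadE (S : Type*) [Ring S] (n : ℕ) (i j : Fin n) : Matrix (Fin n) (Fin n) S :=
  Matrix.single i j 1

lemma madE_mul {S : Type*} [Ring S] {n : ℕ} (i j k l : Fin n) :
    MadE S n i j * MadE S n k l = if j = k then MadE S n i l else 0 := by
  by_cases h : j = k
  · subst h
    rw [if_pos rfl]
    unfold MadE
    simpa using Matrix.single_mul_single_same (α := S) i j l (1:S) 1
  · rw [if_neg h]
    unfold MadE
    exact Matrix.single_mul_single_of_ne (c := (1:S)) i j k h 1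

section aux

variable {S : Type*} [Ring S] {n : ℕ} [NeZero n] (h01 : (0:Fin n) ≠ 1)
include h01

lemma mad_uv :
    (1 + MadE S n 0 1 + MadE S n 1 0 - MadE S n 1 1) *
      (1 - MadE S n 0 0 + MadE S n 0 1 + MadE S n 1 0 - MadE S n 1 1 - MadE S n 1 1) = 1 := by
  have h10 := h01.symm
  simp [mul_add, add_mul, sub_mul, mul_sub, madE_mul, h01, h10]
  try abel

lemma mad_vu :
    (1 - MadE S n 0 0 + MadE S n 0 1 + MadE S n 1 0 - MadE S n 1 1 - MadE S n 1 1) *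
      (1 + MadE S n 0 1 + MadE S n 1 0 - MadE S n 1 1) = 1 := by
  have h10 := h01.symm
  simp [mul_add, add_mul, sub_mul, mul_sub, madE_mul, h01, h10]
  try abel

lemma mad_cz :
    (MadE S n 0 0 + MadE S n 0 1 + MadE S n 1 0) *
      (MadE S n 0 1 + MadE S n 1 0 - MadE S n 1 1) =
    MadE S n 0 0 + MadE S n 1 1 := by
  have h10 := h01.symm
  simp [mul_add, add_mul, sub_mul, mul_sub, madE_mul, h01, h10]
  try abel

lemma mad_cE :
    (MadE S n 0 0 + MadE S n 0 1 + MadE S n 1 0) * (MadE S n 0 0 + MadE S n 1 1) =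
    MadE S n 0 0 + MadE S n 0 1 + MadE S n 1 0 := by
  have h10 := h01.symm
  simp [mul_add, add_mul, sub_mul, mul_sub, madE_mul, h01, h10]
  try abel

lemma mad_kill :
    (1 - (MadE S n 0 0 + MadE S n 1 1)) * MadE S n 0 0 = 0 := by
  have h10 := h01.symm
  simp [mul_add, add_mul, sub_mul, mul_sub, mul_neg, neg_mul, madE_mul, h01, h10]
  try abel

end aux

set_option maxHeartbeats 2000000 in
theorem matrix_not_isUJsharp (S : Type*) [Ring S] [Nontrivial S] (n : ℕ) (hn : 2 ≤ n) :
    ¬ IsUJsharp (Matrix (Fin n) (Fin n) S) := by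
  haveI : NeZero n := ⟨by omega⟩
  have h01 : (0 : Fin n) ≠ 1 := by
    simp [Fin.ext_iff, Fin.val_one', Nat.mod_eq_of_lt (by omega : 1 < n)]
  intro h
  set e : Fin n → Fin n → Matrix (Fin n) (Fin n) S := MadE S n with he
  set u : Matrix (Fin n) (Fin n) S := 1 + e 0 1 + e 1 0 - e 1 1 with hu
  set v : Matrix (Fin n) (Fin n) S :=
    1 - e 0 0 + e 0 1 + e 1 0 - e 1 1 - e 1 1 with hv
  obtain ⟨k, hk1, hk⟩ := h ⟨u, v, mad_uv h01, mad_vu h01⟩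
  set z : Matrix (Fin n) (Fin n) S := e 0 1 + e 1 0 - e 1 1 with hz
  set c : Matrix (Fin n) (Fin n) S := e 0 0 + e 0 1 + e 1 0 with hc
  set E : Matrix (Fin n) (Fin n) S := e 0 0 + e 1 1 with hE
  have hcz : c * z = E := mad_cz h01
  have hcE : c * E = c := mad_cE h01
  have hu1 : u - 1 = z := by rw [hu, hz]; abel
  rw [hu1] at hk
  have key : ∀ m : ℕ, c ^ (m + 1) * z ^ (m + 1) = E := by
    intro m
    induction m with
    | zero => simpa using hcz
    | succ m ih =>
      have h2 : c ^ (m + 2) * z ^ (m + 2) = c * (c ^ (m + 1) * z ^ (m + 1)) * z := by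
        rw [pow_succ' c (m + 1), pow_succ z (m + 1)]
        noncomm_ring
      rw [h2, ih, hcE, hcz]
  obtain ⟨m, rfl⟩ : ∃ m, k = m + 1 := ⟨k - 1, by omega⟩
  obtain ⟨w, hw⟩ := Ideal.mem_jacobson_iff.mp hk (-(c ^ (m + 1)))
  rw [Ideal.mem_bot, mul_neg, neg_mul, mul_assoc, key m] at hw
  -- hw : -(w * E) + w - 1 = 0, so w is a left inverse of 1 - E
  have hw1 : w * (1 - E) = 1 := by
    rw [mul_sub, mul_one, ← sub_eq_zero]
    abel_nf
    abel_nf at hw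
    convert hw using 1
    abel
  have hkill : (1 - E) * e 0 0 = 0 := mad_kill h01
  have he00 : e 0 0 ≠ 0 := by
    intro h0
    have h00 := congrFun (congrFun h0 0) 0
    simp [he, MadE, Matrix.single] at h00
  apply he00
  calc e 0 0 = (w * (1 - E)) * e 0 0 := by rw [hw1, one_mul]
    _ = w * ((1 - E) * e 0 0) := by rw [mul_assoc]
    _ = 0 := by rw [hkill, mul_zero]
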